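/- arXiv:0711.1694 — 5 statements merged into one kernel-verified Lean document; each statement's English description precedes it below -/
import Mathlib

section
/- The total probability that the measured walk ever reaches the final vertex is bounded by the norm squared of the component of the initial state outside the symmetry-protected subspace: for any unit vector ψ ∈ V, the sum over all t ≥ 1 of p(t) = ‖P_f U (Q_f U)^{t−1} ψ‖² is at most ‖(1 − P) ψ‖². In particular, if P ψ ≠ 0 then the total hitting probability is strictly less than 1 (the hitting time is infinite). -/
open scoped ComplexInnerProductSpace in
private lemma norm_map_unitary {V : Type*} [NormedAddCommGroup V] [InnerProductSpace ℂ V]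
    [FiniteDimensional ℂ V] {U : V →ₗ[ℂ] V} (hU : U ∈ unitary (V →ₗ[ℂ] V)) (x : V) :
    ‖U x‖ = ‖x‖ := by
  have h := Unitary.star_mul_self_of_mem hU
  rw [LinearMap.star_eq_adjoint] at h
  have : ⟪U x, U x⟫ = ⟪x, x⟫ := by
    rw [← LinearMap.adjoint_inner_left]
    have : (LinearMap.adjoint U) (U x) = x := by
      have := congrArg (fun (T : V →ₗ[ℂ] V) => T x) h
      simpa [Module.End.mul_apply] using this
    rw [this]
  rw [inner_self_eq_norm_sq_to_K, inner_self_eq_norm_sq_to_K] at this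
  have h2 : (‖U x‖ : ℝ) ^ 2 = ‖x‖ ^ 2 := by exact_mod_cast this
  have := (sq_eq_sq_iff_abs_eq_abs _ _).mp h2
  rwa [abs_of_nonneg (norm_nonneg _), abs_of_nonneg (norm_nonneg _)] at this

open scoped ComplexInnerProductSpace in
private lemma proj_pythag {V : Type*} [NormedAddCommGroup V] [InnerProductSpace ℂ V]
    [FiniteDimensional ℂ V] {P : V →ₗ[ℂ] V}
    (hidem : P * P = P) (hsa : LinearMap.adjoint P = P) (x : V) :
    ‖P x‖ ^ 2 + ‖(1 - P) x‖ ^ 2 = ‖x‖ ^ 2 := by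
  have hzero : P ((1 - P) x) = 0 := by
    have := congrArg (fun (T : V →ₗ[ℂ] V) => T x) hidem
    simp only [Module.End.mul_apply] at this
    simp [LinearMap.sub_apply, this]
  have horth : ⟪P x, (1 - P) x⟫ = 0 := by
    calc ⟪P x, (1 - P) x⟫ = ⟪(LinearMap.adjoint P) x, (1 - P) x⟫ := by rw [hsa]
      _ = ⟪x, P ((1 - P) x)⟫ := LinearMap.adjoint_inner_left _ _ _
      _ = 0 := by rw [hzero]; simp
  have := norm_add_sq_eq_norm_sq_add_norm_sq_of_inner_eq_zero _ _ horth
  have hx : P x + (1 - P) x = x := by simp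
  rw [hx] at this
  linarith

/-- The total probability that the measured walk ever reaches the final vertex,
`∑_{t ≥ 1} ‖P_f U (Q_f U)^(t-1) ψ‖²` (written below as a sum over `t : ℕ` with
exponent `t`), is bounded by `‖(1 - P) ψ‖²`; in particular, if `P ψ ≠ 0` it is
strictly less than `1`, i.e. the hitting time is infinite. Here `Q_f = 1 - P_f`. -/
theorem total_hitting_probability_le_of_protected_component
    {V : Type*} [NormedAddCommGroup V] [InnerProductSpace ℂ V] [FiniteDimensional ℂ V]
    (U Pf P : V →ₗ[ℂ] V)
    (hU : U ∈ unitary (V →ₗ[ℂ] V))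
    (hPf_idem : Pf * Pf = Pf) (hPf_sa : LinearMap.adjoint Pf = Pf)
    (hP_idem : P * P = P) (hP_sa : LinearMap.adjoint P = P)
    (hUP : U * P = P * U) (hPfP : Pf * P = 0)
    (ψ : V) (hψ : ‖ψ‖ = 1) :
    (∑' t : ℕ, ‖(Pf * U * ((1 - Pf) * U) ^ t) ψ‖ ^ 2) ≤ ‖(1 - P) ψ‖ ^ 2 ∧
      (P ψ ≠ 0 → (∑' t : ℕ, ‖(Pf * U * ((1 - Pf) * U) ^ t) ψ‖ ^ 2) < 1) := by
  set φ : V := (1 - P) ψ with hφ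
  -- (QU)^t ∘ P = P ∘ U^t
  have hcomm : ∀ t : ℕ, ((1 - Pf) * U) ^ t * P = P * U ^ t := by
    intro t
    induction t with
    | zero => simp
    | succ n ih =>
      have h1 : (1 - Pf) * U * P = P * U := by
        rw [mul_assoc, hUP, ← mul_assoc, sub_mul, one_mul, hPfP, sub_zero]
      calc ((1 - Pf) * U) ^ (n + 1) * P = ((1 - Pf) * U) ^ n * ((1 - Pf) * U * P) := by
            rw [pow_succ, mul_assoc]
        _ = ((1 - Pf) * U) ^ n * P * U := by rw [h1, mul_assoc]
        _ = P * U ^ n * U := by rw [ih]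
        _ = P * U ^ (n + 1) := by rw [mul_assoc, pow_succ]
  -- the measured amplitudes on ψ equal those on φ
  have hval : ∀ t : ℕ, (Pf * U * ((1 - Pf) * U) ^ t) ψ = (Pf * U * ((1 - Pf) * U) ^ t) φ := by
    intro t
    have hzero : Pf * U * ((1 - Pf) * U) ^ t * P = 0 := by
      rw [mul_assoc, hcomm, ← mul_assoc, mul_assoc Pf U P, hUP, ← mul_assoc, hPfP,
        zero_mul, zero_mul]
    have := congrArg (fun (T : V →ₗ[ℂ] V) => T ψ) hzero
    simp only [Module.End.mul_apply, LinearMap.zero_apply] at this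
    simp only [hφ, map_sub, Module.End.one_apply, LinearMap.sub_apply, Module.End.mul_apply]
    simp [this]
  -- telescoping partial sums
  have hstep : ∀ x : V, ‖(Pf * U) x‖ ^ 2 + ‖((1 - Pf) * U) x‖ ^ 2 = ‖x‖ ^ 2 := by
    intro x
    have := proj_pythag hPf_idem hPf_sa (U x)
    simpa [Module.End.mul_apply, norm_map_unitary hU x] using this
  have hpartial : ∀ n : ℕ,
      ∑ t ∈ Finset.range n, ‖(Pf * U * ((1 - Pf) * U) ^ t) φ‖ ^ 2
        = ‖φ‖ ^ 2 - ‖(((1 - Pf) * U) ^ n) φ‖ ^ 2 := by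
    intro n
    induction n with
    | zero => simp
    | succ n ih =>
      rw [Finset.sum_range_succ, ih]
      have := hstep ((((1 - Pf) * U) ^ n) φ)
      have e1 : (Pf * U) ((((1 - Pf) * U) ^ n) φ) = (Pf * U * ((1 - Pf) * U) ^ n) φ := rfl
      have e2 : ((1 - Pf) * U) ((((1 - Pf) * U) ^ n) φ) = (((1 - Pf) * U) ^ (n + 1)) φ := by
        rw [pow_succ']; rfl
      rw [e1, e2] at this
      linarith
  have hbound : ∀ n : ℕ,
      ∑ t ∈ Finset.range n, ‖(Pf * U * ((1 - Pf) * U) ^ t) ψ‖ ^ 2 ≤ ‖φ‖ ^ 2 := by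
    intro n
    have : ∑ t ∈ Finset.range n, ‖(Pf * U * ((1 - Pf) * U) ^ t) ψ‖ ^ 2
        = ∑ t ∈ Finset.range n, ‖(Pf * U * ((1 - Pf) * U) ^ t) φ‖ ^ 2 := by
      exact Finset.sum_congr rfl fun t _ => by rw [hval t]
    rw [this, hpartial n]
    nlinarith [sq_nonneg ‖(((1 - Pf) * U) ^ n) φ‖]
  have htsum : (∑' t : ℕ, ‖(Pf * U * ((1 - Pf) * U) ^ t) ψ‖ ^ 2) ≤ ‖φ‖ ^ 2 :=
    Summable.tsum_le_of_sum_range_le (summable_of_sum_range_le (fun t => by positivity) hbound) hbound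
  refine ⟨htsum, fun hPψ => ?_⟩
  have hpyth := proj_pythag hP_idem hP_sa ψ
  have hPpos : 0 < ‖P ψ‖ ^ 2 := pow_pos (norm_pos_iff.mpr hPψ) 2
  have : ‖φ‖ ^ 2 < 1 := by rw [hφ]; nlinarith [hψ]
  linarith
end

section
/- The superoperator I − N fails to be invertible exactly when there are eigenvectors of U avoiding the final vertex: the linear map Φ on the space of linear operators on V defined by Φ(X) = X − Q_f U X U† Q_f has a nontrivial kernel if and only if there exist a nonzero vector v ∈ V and a scalar μ ∈ ℂ such that U v = μ v and P_f v = 0. -/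
open scoped InnerProductSpace ComplexConjugate

/-- The superoperator `Φ(X) = X - Q_f U X U† Q_f` (with `Q_f = 1 - P_f`) on `End(V)`
has a nontrivial kernel if and only if there is a nonzero eigenvector of `U`
having no overlap with the final vertex, i.e. `U v = μ v` and `P_f v = 0`. -/
theorem superoperator_not_injective_iff_eigenvector_avoiding_final_vertex
    {V : Type*} [NormedAddCommGroup V] [InnerProductSpace ℂ V] [FiniteDimensional ℂ V]
    (U Pf : V →ₗ[ℂ] V)
    (hU : U ∈ unitary (V →ₗ[ℂ] V))
    (hPf_idem : Pf * Pf = Pf) (hPf_sa : LinearMap.adjoint Pf = Pf) :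
    (∃ X : V →ₗ[ℂ] V, X ≠ 0 ∧
        X - (1 - Pf) * U * X * LinearMap.adjoint U * (1 - Pf) = 0) ↔
      (∃ (v : V) (μ : ℂ), v ≠ 0 ∧ U v = μ • v ∧ Pf v = 0) := by
  haveI : CompleteSpace V := FiniteDimensional.complete ℂ V
  set Q : V →ₗ[ℂ] V := 1 - Pf with hQ_def
  have hQ_sa : LinearMap.adjoint Q = Q := by
    rw [hQ_def, ← LinearMap.star_eq_adjoint, star_sub, star_one,
      LinearMap.star_eq_adjoint, hPf_sa]
  have hQ_idem : Q * Q = Q := by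
    rw [hQ_def]
    rw [sub_mul, one_mul, mul_sub, mul_one, hPf_idem]
    abel
  have hQPf : Q * Pf = 0 := by
    rw [hQ_def, sub_mul, one_mul, hPf_idem, sub_self]
  -- unitarity facts
  have hUU : LinearMap.adjoint U * U = 1 := by
    rw [← LinearMap.star_eq_adjoint]; exact hU.1
  have hUU' : U * LinearMap.adjoint U = 1 := by
    rw [← LinearMap.star_eq_adjoint]; exact hU.2
  have hU_inner : ∀ x y : V, ⟪U x, U y⟫_ℂ = ⟪x, y⟫_ℂ := by
    intro x y
    have h := LinearMap.adjoint_inner_left U y (U x)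
    -- ⟪adjoint U (U x), y⟫ = ⟪U x, U y⟫
    have h2 : (LinearMap.adjoint U) (U x) = x := by
      have := LinearMap.ext_iff.mp hUU x
      simpa [Module.End.mul_apply] using this
    rw [h2] at h
    exact h.symm
  have hU_norm : ∀ x : V, ‖U x‖ = ‖x‖ := by
    intro x
    have h := hU_inner x x
    rw [inner_self_eq_norm_sq_to_K, inner_self_eq_norm_sq_to_K] at h
    have h2 : (‖U x‖ : ℝ) ^ 2 = ‖x‖ ^ 2 := by exact_mod_cast h
    nlinarith [norm_nonneg (U x), norm_nonneg x]
  have hUadj_norm : ∀ x : V, ‖(LinearMap.adjoint U) x‖ = ‖x‖ := by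
    intro x
    have h := hU_norm ((LinearMap.adjoint U) x)
    have h2 : U ((LinearMap.adjoint U) x) = x := by
      have := LinearMap.ext_iff.mp hUU' x
      simpa [Module.End.mul_apply] using this
    rw [h2] at h
    exact h.symm
  -- moving Q across the inner product
  have hQ_move : ∀ x y : V, ⟪Q x, y⟫_ℂ = ⟪x, Q y⟫_ℂ := by
    intro x y
    have := LinearMap.adjoint_inner_left Q y x
    rw [hQ_sa] at this
    exact this
  have hQ_le : ∀ w : V, ‖Q w‖ ≤ ‖w‖ := by
    intro w
    by_cases h0 : ‖Q w‖ = 0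
    · rw [h0]; exact norm_nonneg w
    · have hpos : 0 < ‖Q w‖ := lt_of_le_of_ne (norm_nonneg _) (Ne.symm h0)
      have h1 : ⟪Q w, Q w⟫_ℂ = ⟪w, Q w⟫_ℂ := by
        rw [hQ_move w (Q w)]
        congr 1
        have := LinearMap.ext_iff.mp hQ_idem w
        simpa [Module.End.mul_apply] using this
      have h2 : (‖Q w‖ : ℝ) ^ 2 = Complex.re ⟪w, Q w⟫_ℂ := by
        rw [← h1, inner_self_eq_norm_sq_to_K]
        simp [← Complex.ofReal_pow]
      have h3 : Complex.re ⟪w, Q w⟫_ℂ ≤ ‖(⟪w, Q w⟫_ℂ)‖ := Complex.re_le_norm _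
      have h4 : ‖(⟪w, Q w⟫_ℂ)‖ ≤ ‖w‖ * ‖Q w‖ := norm_inner_le_norm w (Q w)
      nlinarith
  have hQ_eq_of_norm : ∀ w : V, ‖Q w‖ = ‖w‖ → Pf w = 0 := by
    intro w hw
    have horth : ⟪Q w, Pf w⟫_ℂ = 0 := by
      rw [hQ_move]
      have : Q (Pf w) = 0 := by
        have := LinearMap.ext_iff.mp hQPf w
        simpa [Module.End.mul_apply] using this
      rw [this, inner_zero_right]
    have hsum : Q w + Pf w = w := by
      simp [hQ_def, LinearMap.sub_apply]
    have hpyth := norm_add_sq (𝕜 := ℂ) (Q w) (Pf w)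
    rw [hsum, horth, hw] at hpyth
    simp at hpyth
    exact hpyth
  constructor
  · -- forward direction
    rintro ⟨X, hX0, hXeq⟩
    rw [sub_eq_zero] at hXeq
    obtain ⟨w₀, hw₀⟩ : ∃ w, X w ≠ 0 := by
      by_contra hc
      push_neg at hc
      exact hX0 (LinearMap.ext fun w => by simp [hc w])
    haveI : Nontrivial V := ⟨⟨X w₀, 0, hw₀⟩⟩
    set T : V →ₗ[ℂ] V := Q * U with hT_def
    set S : V →ₗ[ℂ] V := LinearMap.adjoint U * Q with hS_def
    have hfix : T * X * S = X := by
      rw [hT_def, hS_def, ← mul_assoc]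
      exact hXeq.symm
    have hfix_n : ∀ n : ℕ, T ^ n * X * S ^ n = X := by
      intro n
      induction n with
      | zero => simp
      | succ n ih =>
        calc T ^ (n+1) * X * S ^ (n+1)
            = T ^ n * (T * X * S) * S ^ n := by
              rw [pow_succ, pow_succ']; noncomm_ring
          _ = T ^ n * X * S ^ n := by rw [hfix]
          _ = X := ih
    have hT_pt : ∀ w : V, ‖T w‖ ≤ ‖w‖ := by
      intro w
      rw [hT_def, Module.End.mul_apply]
      calc ‖Q (U w)‖ ≤ ‖U w‖ := hQ_le _
        _ = ‖w‖ := hU_norm w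
    have hS_pt : ∀ w : V, ‖S w‖ ≤ ‖w‖ := by
      intro w
      rw [hS_def, Module.End.mul_apply, hUadj_norm]
      exact hQ_le w
    have hSn_pt : ∀ (n : ℕ) (w : V), ‖(S ^ n) w‖ ≤ ‖w‖ := by
      intro n
      induction n with
      | zero => intro w; simp
      | succ n ih =>
        intro w
        rw [pow_succ, Module.End.mul_apply]
        exact le_trans (ih (S w)) (hS_pt w)
    have hTn_pt : ∀ (n : ℕ) (w : V), ‖(T ^ n) w‖ ≤ ‖w‖ := by
      intro n
      induction n with
      | zero => intro w; simp
      | succ n ih =>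
        intro w
        rw [pow_succ, Module.End.mul_apply]
        exact le_trans (ih (T w)) (hT_pt w)
    set T' : V →L[ℂ] V := LinearMap.toContinuousLinearMap T with hT'_def
    set X' : V →L[ℂ] V := LinearMap.toContinuousLinearMap X with hX'_def
    have happ : ∀ (n : ℕ) (w : V), (T' ^ n) w = (T ^ n) w := by
      intro n
      induction n with
      | zero => intro w; simp
      | succ n ih =>
        intro w
        rw [pow_succ, pow_succ, ContinuousLinearMap.mul_apply, Module.End.mul_apply]
        have hw : T' w = T w := rfl
        rw [hw]
        exact ih (T w)
    have hX'0 : X' ≠ 0 := by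
      intro h
      apply hw₀
      have := ContinuousLinearMap.ext_iff.mp h w₀
      simpa [hX'_def] using this
    have hX'pos : 0 < ‖X'‖ := norm_pos_iff.mpr hX'0
    have hTn_le : ∀ n : ℕ, ‖T' ^ n‖ ≤ 1 := by
      intro n
      apply ContinuousLinearMap.opNorm_le_bound _ zero_le_one
      intro w
      rw [happ, one_mul]
      exact hTn_pt n w
    have hTn_ge : ∀ n : ℕ, 1 ≤ ‖T' ^ n‖ := by
      intro n
      have hb : ‖X'‖ ≤ ‖T' ^ n‖ * ‖X'‖ := by
        apply ContinuousLinearMap.opNorm_le_bound _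
          (mul_nonneg (norm_nonneg _) (norm_nonneg _))
        intro w
        have h1 : X' w = (T ^ n) (X ((S ^ n) w)) := by
          have := LinearMap.ext_iff.mp (hfix_n n) w
          simp only [Module.End.mul_apply] at this
          simpa [hX'_def] using this.symm
        rw [h1]
        calc ‖(T ^ n) (X ((S ^ n) w))‖
            ≤ ‖T' ^ n‖ * ‖X ((S ^ n) w)‖ := by
              rw [← happ]; exact ContinuousLinearMap.le_opNorm _ _
          _ ≤ ‖T' ^ n‖ * (‖X'‖ * ‖(S ^ n) w‖) := by
              apply mul_le_mul_of_nonneg_left _ (norm_nonneg _)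
              have : X ((S ^ n) w) = X' ((S ^ n) w) := by simp [hX'_def]
              rw [this]
              exact ContinuousLinearMap.le_opNorm _ _
          _ ≤ ‖T' ^ n‖ * (‖X'‖ * ‖w‖) := by
              apply mul_le_mul_of_nonneg_left _ (norm_nonneg _)
              exact mul_le_mul_of_nonneg_left (hSn_pt n w) (norm_nonneg _)
          _ = ‖T' ^ n‖ * ‖X'‖ * ‖w‖ := by ring
      exact (le_mul_iff_one_le_left hX'pos).mp hb
    have hTn_eq : ∀ n : ℕ, ‖T' ^ n‖ = 1 := fun n => le_antisymm (hTn_le n) (hTn_ge n)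
    have hrad : spectralRadius ℂ T' = 1 := by
      have h := spectrum.pow_nnnorm_pow_one_div_tendsto_nhds_spectralRadius T'
      have h2 : (fun n : ℕ => (‖T' ^ n‖₊ : ENNReal) ^ (1 / (n : ℝ))) =
          fun _ : ℕ => (1 : ENNReal) := by
        funext n
        have hnn : ‖T' ^ n‖₊ = 1 := by
          ext
          rw [coe_nnnorm, hTn_eq n]
          simp
        rw [hnn]
        simp
      rw [h2] at h
      exact tendsto_nhds_unique h tendsto_const_nhds
    haveI : Nontrivial (V →L[ℂ] V) := by
      refine ⟨⟨1, 0, fun h => hw₀ ?_⟩⟩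
      have := ContinuousLinearMap.ext_iff.mp h (X w₀)
      simpa using this
    obtain ⟨lam, hlam_mem, hlam_norm⟩ := spectrum.exists_nnnorm_eq_spectralRadius T'
    rw [hrad] at hlam_norm
    have hlam1 : ‖lam‖ = 1 := by
      have h1 : ‖lam‖₊ = 1 := by exact_mod_cast hlam_norm
      rw [← coe_nnnorm, h1, NNReal.coe_one]
    have hlam0 : lam ≠ 0 := by
      intro h; rw [h] at hlam1; simp at hlam1
    -- extract an eigenvector of T with eigenvalue lam
    have hnun : ¬IsUnit (algebraMap ℂ (V →L[ℂ] V) lam - T') := spectrum.mem_iff.mp hlam_mem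
    set L : V →ₗ[ℂ] V := lam • 1 - T with hL_def
    have hker : ∃ v : V, v ≠ 0 ∧ T v = lam • v := by
      by_contra hcon
      push_neg at hcon
      have hinj : Function.Injective L := by
        rw [← LinearMap.ker_eq_bot]
        rw [Submodule.eq_bot_iff]
        intro v hv
        rw [LinearMap.mem_ker, hL_def, LinearMap.sub_apply, LinearMap.smul_apply,
          Module.End.one_apply, sub_eq_zero] at hv
        by_contra hv0
        exact hcon v hv0 hv.symm
      have hbij : Function.Bijective L :=
        ⟨hinj, (LinearMap.injective_iff_surjective).mp hinj⟩
      apply hnun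
      let e : V ≃ₗ[ℂ] V := LinearEquiv.ofBijective L hbij
      let E : V ≃L[ℂ] V := e.toContinuousLinearEquiv
      have hEeq : algebraMap ℂ (V →L[ℂ] V) lam - T' = (E : V →L[ℂ] V) := by
        ext w
        have : (E : V →L[ℂ] V) w = L w := rfl
        rw [this, hL_def]
        simp [Algebra.algebraMap_eq_smul_one, hT'_def]
      rw [hEeq]
      exact ⟨E.toUnit, rfl⟩
    obtain ⟨v, hv0, hTv⟩ := hker
    have hQUv : Q (U v) = lam • v := by
      have := hTv
      rwa [hT_def, Module.End.mul_apply] at this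
    have hPfUv : Pf (U v) = 0 := by
      apply hQ_eq_of_norm
      rw [hQUv, norm_smul, hlam1, one_mul, hU_norm]
    have hUv : U v = lam • v := by
      rw [← hQUv, hQ_def]
      simp [LinearMap.sub_apply, hPfUv]
    have hPfv : Pf v = 0 := by
      have hv_eq : v = lam⁻¹ • U v := by
        rw [hUv, smul_smul, inv_mul_cancel₀ hlam0, one_smul]
      rw [hv_eq, map_smul, hPfUv, smul_zero]
    exact ⟨v, lam, hv0, hUv, hPfv⟩
  · -- backward direction
    rintro ⟨v, μ, hv, hUv, hPv⟩
    have hQv : Q v = v := by simp [hQ_def, LinearMap.sub_apply, hPv]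
    have hμ1 : ‖μ‖ = 1 := by
      have h := hU_norm v
      rw [hUv, norm_smul] at h
      have hvpos : 0 < ‖v‖ := norm_pos_iff.mpr hv
      exact mul_right_cancel₀ hvpos.ne' (by rw [h, one_mul])
    have hconj : (starRingEnd ℂ) μ * μ = 1 := by
      rw [RCLike.conj_mul, hμ1]
      norm_num
    set X : V →ₗ[ℂ] V := (innerₛₗ ℂ v).smulRight v with hX_def
    refine ⟨X, ?_, ?_⟩
    · intro h
      have := LinearMap.ext_iff.mp h v
      rw [hX_def] at this
      simp only [LinearMap.smulRight_apply, innerₛₗ_apply_apply, LinearMap.zero_apply] at this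
      rcases smul_eq_zero.mp this with h1 | h2
      · exact (inner_self_ne_zero.mpr hv) h1
      · exact hv h2
    · rw [sub_eq_zero]
      ext w
      simp only [Module.End.mul_apply]
      have r1 : X ((LinearMap.adjoint U) (Q w)) = ((starRingEnd ℂ) μ * ⟪v, w⟫_ℂ) • v := by
        rw [hX_def]
        simp only [LinearMap.smulRight_apply, innerₛₗ_apply_apply]
        rw [LinearMap.adjoint_inner_right, hUv, inner_smul_left, ← hQ_move, hQv]
      rw [r1, map_smul, hUv, map_smul, map_smul, hQv, smul_smul]
      rw [hX_def]
      simp only [LinearMap.smulRight_apply, innerₛₗ_apply_apply]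
      congr 1
      have : (starRingEnd ℂ) μ * ⟪v, w⟫_ℂ * μ = ⟪v, w⟫_ℂ * ((starRingEnd ℂ) μ * μ) := by ring
      rw [this, hconj, mul_one]
end

section
/- Closed form for the classical hitting time of the simple random walk on the n-dimensional hypercube: let n ≥ 1 and let τ : {0, 1, …, n} → ℚ be the unique function satisfying τ(n) = 0, τ(0) = τ(1) + 1, and τ(x) = ((n−x)/n)·τ(x+1) + (x/n)·τ(x−1) + 1 for 1 ≤ x ≤ n−1. Then τ(0) = Σ_{x=0}^{n−1} ( Σ_{j=0}^{x−1} C(n, x−j) + 1 ) / C(n−1, x), where C(a,b) denotes the binomial coefficient. -/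
/-- Closed form for the classical hitting time of the simple random walk on the
`n`-dimensional hypercube: if `τ` satisfies `τ(n) = 0`, `τ(0) = τ(1) + 1` and
`τ(x) = ((n-x)/n) τ(x+1) + (x/n) τ(x-1) + 1` for `1 ≤ x ≤ n-1`, then
`τ(0) = ∑_{x=0}^{n-1} (∑_{j=0}^{x-1} C(n, x-j) + 1) / C(n-1, x)`. -/
theorem hypercube_classical_hitting_time_closed_form
    (n : ℕ) (hn : 1 ≤ n) (τ : ℕ → ℚ)
    (hend : τ n = 0)
    (h0 : τ 0 = τ 1 + 1)
    (hrec : ∀ x : ℕ, 1 ≤ x → x ≤ n - 1 →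
      τ x = ((n : ℚ) - (x : ℚ)) / (n : ℚ) * τ (x + 1)
        + (x : ℚ) / (n : ℚ) * τ (x - 1) + 1) :
    τ 0 = ∑ x ∈ Finset.range n,
      ((∑ j ∈ Finset.range x, (n.choose (x - j) : ℚ)) + 1) / ((n - 1).choose x : ℚ) := by
  have hn0 : (n : ℚ) ≠ 0 := by positivity
  have key : ∀ x : ℕ, x ≤ n - 1 →
      τ x - τ (x + 1) =
        ((∑ j ∈ Finset.range x, (n.choose (x - j) : ℚ)) + 1) / ((n - 1).choose x : ℚ) := by
    intro x
    induction x with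
    | zero =>
      intro _
      simp [h0]
    | succ y ih =>
      intro hy
      have hy' : y ≤ n - 1 := le_of_lt (Nat.lt_of_lt_of_le (Nat.lt_succ_self y) hy)
      have IH := ih hy'
      have hr := hrec (y + 1) (by omega) hy
      have hyn : y + 1 ≤ n - 1 := hy
      have hylt : y + 1 < n := by omega
      -- cast facts
      have hc : ((n - 1).choose y : ℚ) ≠ 0 :=
        Nat.cast_ne_zero.mpr (Nat.choose_pos (by omega : y ≤ n - 1)).ne'
      have hc' : ((n - 1).choose (y + 1) : ℚ) ≠ 0 :=
        Nat.cast_ne_zero.mpr (Nat.choose_pos (by omega : y + 1 ≤ n - 1)).ne'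
      have hnx : (n : ℚ) - (y + 1) ≠ 0 := by
        have : ((y : ℚ) + 1) < n := by exact_mod_cast hylt
        intro h; linarith
      -- binomial identities in ℚ
      have hb1 : ((n - 1).choose (y + 1) : ℚ) * (y + 1) =
          ((n - 1).choose y : ℚ) * ((n : ℚ) - 1 - y) := by
        have h := Nat.choose_succ_right_eq (n - 1) y
        have h2 : ((n - 1).choose (y + 1) * (y + 1) : ℕ) = (n - 1).choose y * (n - 1 - y) := h
        have hsub : ((n - 1 - y : ℕ) : ℚ) = (n : ℚ) - 1 - y := by
          have : (((n - 1 : ℕ) : ℚ)) = (n : ℚ) - 1 := by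
            push_cast [Nat.cast_sub hn]; ring
          rw [Nat.cast_sub (by omega : y ≤ n - 1), this]
        calc ((n - 1).choose (y + 1) : ℚ) * (y + 1)
            = (((n - 1).choose (y + 1) * (y + 1) : ℕ) : ℚ) := by push_cast; ring
          _ = (((n - 1).choose y * (n - 1 - y) : ℕ) : ℚ) := by rw [h2]
          _ = ((n - 1).choose y : ℚ) * ((n : ℚ) - 1 - y) := by push_cast [hsub]; ring
      have hb2 : (n : ℚ) * ((n - 1).choose y : ℚ) = (n.choose (y + 1) : ℚ) * (y + 1) := by
        have h := Nat.add_one_mul_choose_eq (n - 1) y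
        have h2 : n * (n - 1).choose y = (n).choose (y + 1) * (y + 1) := by
          have hn1 : n - 1 + 1 = n := by omega
          rw [← hn1]; exact_mod_cast h
        exact_mod_cast congrArg (fun m : ℕ => (m : ℚ)) h2
      -- sum shift
      have hsum : (∑ j ∈ Finset.range (y + 1), (n.choose (y + 1 - j) : ℚ)) =
          (∑ j ∈ Finset.range y, (n.choose (y - j) : ℚ)) + (n.choose (y + 1) : ℚ) := by
        rw [Finset.sum_range_succ' (fun j => (n.choose (y + 1 - j) : ℚ))]
        simp
      rw [hsum]
      -- from hrec: (n - (y+1)) * (τ(y+1) - τ(y+2)) = (y+1) * (τ y - τ(y+1)) + n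
      have hD : ((n : ℚ) - (y + 1)) * (τ (y + 1) - τ (y + 2)) =
          ((y : ℚ) + 1) * (τ y - τ (y + 1)) + n := by
        have h1 : ((y + 1 : ℕ) : ℚ) = (y : ℚ) + 1 := by push_cast; ring
        have h2 : (y + 1) - 1 = y := by omega
        rw [h2] at hr
        field_simp at hr
        rw [h1, show y + 1 + 1 = y + 2 from rfl] at hr
        linarith [hr]
      have hDval : τ (y + 1) - τ (y + 2) =
          (((y : ℚ) + 1) * (τ y - τ (y + 1)) + n) / ((n : ℚ) - (y + 1)) := by
        field_simp
        linarith [hD]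
      rw [hDval, IH]
      field_simp
      linear_combination ((∑ j ∈ Finset.range y, (n.choose (y - j) : ℚ)) + 1 +
          (n.choose (y + 1) : ℚ)) * hb1 + ((n - 1).choose (y + 1) : ℚ) * hb2
  have tel : τ 0 - τ n = ∑ x ∈ Finset.range n, (τ x - τ (x + 1)) := by
    rw [Finset.sum_range_sub' τ]
  rw [hend, sub_zero] at tel
  rw [tel]
  apply Finset.sum_congr rfl
  intro x hx
  have hx' : x < n := Finset.mem_range.mp hx
  exact key x (by omega)
end

section
/- Infinite hitting times on Cayley graphs from large irreducible representations: let G be a finite group, d ≥ 1, and suppose G has an irreducible complex representation of dimension strictly greater than d. Let U be any unitary operator on V = (G → ℂ) ⊗ ℂ^d commuting with λ(g) ⊗ 1 for every g ∈ G, and let g_f ∈ G with P_f the orthogonal projection of V onto (span of the indicator function of g_f) ⊗ ℂ^d. Then there exist a nonzero vector v ∈ V and μ ∈ ℂ with U v = μ v and P_f v = 0 (an eigenvector of the evolution operator having no overlap with the final vertex for any coin state). -/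
open CategoryTheory

/-- The operator `λ(g) ⊗ 1` on the walk Hilbert space `(G → ℂ) ⊗ ℂ^d`
(modelled as `EuclideanSpace ℂ (G × Fin d)`), where `λ` is the left regular
representation `(λ(g) f)(x) = f (g⁻¹ x)` and the identity acts on the coin. -/
def coinedRegRep (G : Type) [Group G] (d : ℕ) (g : G) :
    EuclideanSpace ℂ (G × Fin d) →ₗ[ℂ] EuclideanSpace ℂ (G × Fin d) where
  toFun v := WithLp.toLp 2 (fun p : G × Fin d => v (g⁻¹ * p.1, p.2))
  map_add' _ _ := by ext; simp
  map_smul' _ _ := by ext; simp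

/-- The orthogonal projection of the walk space `(G → ℂ) ⊗ ℂ^d` onto the
final-vertex subspace `(span of the indicator of g_f) ⊗ ℂ^d`. -/
def finalVertexProj (G : Type) [Group G] [DecidableEq G] (d : ℕ) (gf : G) :
    EuclideanSpace ℂ (G × Fin d) →ₗ[ℂ] EuclideanSpace ℂ (G × Fin d) where
  toFun v := WithLp.toLp 2 (fun p : G × Fin d => (if p.1 = gf then (1 : ℂ) else 0) * v p)
  map_add' x y := by
    ext p
    simp [mul_add]
  map_smul' a x := by
    ext p
    simp [mul_left_comm]

/-- A `G`-invariant subspace of a simple `FDRep` is `⊥` or `⊤`. -/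
theorem aux_subrep_bot_or_top {G : Type} [Group G] (W : FDRep ℂ G) [Simple W]
    (K : Submodule ℂ W) (hK : ∀ (g : G), ∀ x ∈ K, W.ρ g x ∈ K) :
    K = ⊥ ∨ K = ⊤ := by
  by_cases hbot : K = ⊥
  · exact Or.inl hbot
  right
  let ρK : Representation ℂ G K :=
    { toFun := fun g => (W.ρ g).restrict (hK g)
      map_one' := LinearMap.ext fun x => Subtype.ext <| by
        simp [LinearMap.restrict_coe_apply]
      map_mul' := fun g h => LinearMap.ext fun x => Subtype.ext <| by
        simp [LinearMap.restrict_coe_apply] }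
  let WK : FDRep ℂ G := FDRep.of ρK
  let ι : WK ⟶ W := ⟨FGModuleCat.ofHom K.subtype, fun g => rfl⟩
  have hι : ι ≠ 0 := by
    intro h0
    obtain ⟨x, hxK, hx0⟩ := Submodule.exists_mem_ne_zero_of_ne_bot hbot
    have : ι.hom ⟨x, hxK⟩ = 0 := by rw [h0]; rfl
    exact hx0 this
  haveI : Mono ι := ConcreteCategory.mono_of_injective ι (fun x y h => Subtype.ext h)
  haveI : IsIso ι := isIso_of_mono_of_nonzero hι
  let e : WK.V ≅ W.V := (Action.forget _ _).mapIso (asIso ι)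
  have hsurj : Function.Surjective (K.subtype) := by
    have := (FGModuleCat.isoToLinearEquiv e).surjective
    intro y
    obtain ⟨x, hx⟩ := this y
    exact ⟨x, hx⟩
  rw [Submodule.eq_top_iff']
  intro y
  obtain ⟨x, hx⟩ := hsurj y
  exact hx ▸ x.2

/-- Infinite hitting times on Cayley graphs from large irreducible representations:
if `G` has an irreducible complex representation `W` of dimension `> d`, then any
unitary `U` on `(G → ℂ) ⊗ ℂ^d` commuting with every `λ(g) ⊗ 1` has an eigenvector
with no overlap with the final vertex `g_f` for any coin state. -/
theorem cayley_walk_eigenvector_avoiding_final_vertex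
    {G : Type} [Group G] [Fintype G] [DecidableEq G] (d : ℕ) (hd : 1 ≤ d)
    (W : FDRep ℂ G) [Simple W] (hW : d < Module.finrank ℂ W)
    (U : EuclideanSpace ℂ (G × Fin d) →ₗ[ℂ] EuclideanSpace ℂ (G × Fin d))
    (hU : U ∈ unitary (EuclideanSpace ℂ (G × Fin d) →ₗ[ℂ] EuclideanSpace ℂ (G × Fin d)))
    (hcomm : ∀ g : G, U * coinedRegRep G d g = coinedRegRep G d g * U)
    (gf : G) :
    ∃ v : EuclideanSpace ℂ (G × Fin d), v ≠ 0 ∧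
      ∃ μ : ℂ, U v = μ • v ∧ finalVertexProj G d gf v = 0 := by
  classical
  set M := EuclideanSpace ℂ (G × Fin d) with hM
  let c0 : Fin d := ⟨0, hd⟩
  -- the space of equivariant maps W →ₗ M
  let H : Submodule ℂ (W →ₗ[ℂ] M) :=
    { carrier := {f | ∀ g : G, coinedRegRep G d g ∘ₗ f = f ∘ₗ W.ρ g}
      add_mem' := fun hf hg g => by
        rw [LinearMap.comp_add, LinearMap.add_comp, hf g, hg g]
      zero_mem' := fun g => by simp
      smul_mem' := fun a f hf g => by
        rw [LinearMap.comp_smul, LinearMap.smul_comp, hf g] }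
  -- a nonzero equivariant map built from a matrix coefficient
  haveI : Nontrivial W := by
    apply Module.nontrivial_of_finrank_pos (R := ℂ)
    omega
  obtain ⟨s₀, hs₀⟩ := exists_ne (0 : W)
  obtain ⟨φ, hφ⟩ : ∃ φ : Module.Dual ℂ W, φ s₀ ≠ 0 := by
    by_contra h
    push_neg at h
    exact hs₀ ((Module.forall_dual_apply_eq_zero_iff ℂ s₀).mp h)
  let F₀ : W →ₗ[ℂ] M :=
    { toFun := fun s => WithLp.toLp 2 (fun p : G × Fin d => if p.2 = c0 then φ (W.ρ p.1⁻¹ s) else 0)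
      map_add' := fun x y => by
        ext p
        show (if p.2 = c0 then φ (W.ρ p.1⁻¹ (x + y)) else 0) =
          (if p.2 = c0 then φ (W.ρ p.1⁻¹ x) else 0) +
          (if p.2 = c0 then φ (W.ρ p.1⁻¹ y) else 0)
        by_cases h : p.2 = c0 <;> simp [h]
      map_smul' := fun a x => by
        ext p
        show (if p.2 = c0 then φ (W.ρ p.1⁻¹ (a • x)) else 0) =
          a * (if p.2 = c0 then φ (W.ρ p.1⁻¹ x) else 0)
        by_cases h : p.2 = c0 <;> simp [h] }
  have hF₀H : F₀ ∈ H := by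
    intro g
    apply LinearMap.ext
    intro s
    ext p
    show (if p.2 = c0 then φ (W.ρ (g⁻¹ * p.1)⁻¹ s) else 0) =
      (if p.2 = c0 then φ (W.ρ p.1⁻¹ (W.ρ g s)) else 0)
    by_cases h : p.2 = c0
    · simp only [h, if_true]
      rw [mul_inv_rev, inv_inv, map_mul, Module.End.mul_apply]
    · simp [h]
  have hF₀ : F₀ ≠ 0 := by
    intro h0
    have : F₀ s₀ (1, c0) = 0 := by rw [h0]; rfl
    simp [F₀] at this
    exact hφ this
  haveI : Nontrivial H := nontrivial_of_ne ⟨F₀, hF₀H⟩ 0 (by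
    intro h
    exact hF₀ (congrArg Subtype.val h))
  -- U acts on H
  let T : Module.End ℂ H :=
    { toFun := fun f => ⟨U ∘ₗ f.1, fun g => LinearMap.ext fun s => by
        have h1 := LinearMap.congr_fun (hcomm g) (f.1 s)
        have h2 := LinearMap.congr_fun (f.2 g) s
        simp only [Module.End.mul_apply] at h1
        simp only [LinearMap.comp_apply] at h2 ⊢
        rw [← h1, h2]⟩
      map_add' := fun f g => Subtype.ext <| by
        show U ∘ₗ (f.1 + g.1) = U ∘ₗ f.1 + U ∘ₗ g.1
        rw [LinearMap.comp_add]
      map_smul' := fun a f => Subtype.ext <| by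
        show U ∘ₗ (a • f.1) = a • (U ∘ₗ f.1)
        rw [LinearMap.comp_smul] }
  obtain ⟨μ, hμ⟩ := Module.End.exists_eigenvalue T
  obtain ⟨F, hF⟩ := hμ.exists_hasEigenvector
  have hTF : U ∘ₗ F.1 = μ • F.1 := by
    have := hF.apply_eq_smul
    exact congrArg Subtype.val this
  set f : W →ₗ[ℂ] M := F.1 with hf
  have hfH : ∀ g : G, coinedRegRep G d g ∘ₗ f = f ∘ₗ W.ρ g := F.2
  have hfne : f ≠ 0 := by
    intro h0
    exact hF.right (Subtype.ext h0)
  -- f is injective since W is simple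
  have hker : LinearMap.ker f = ⊥ := by
    rcases aux_subrep_bot_or_top W (LinearMap.ker f) (fun g x hx => by
      rw [LinearMap.mem_ker] at hx ⊢
      have := LinearMap.congr_fun (hfH g) x
      simp only [LinearMap.comp_apply] at this
      rw [← this, hx, map_zero]) with h | h
    · exact h
    · exact absurd (LinearMap.ker_eq_top.mp h) hfne
  have finj : Function.Injective f := LinearMap.ker_eq_bot.mp hker
  -- evaluation at the final vertex has a kernel by dimension count
  let L : W →ₗ[ℂ] (Fin d → ℂ) :=
    { toFun := fun s => fun j => f s (gf, j)
      map_add' := fun x y => by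
        funext j
        show f (x + y) (gf, j) = f x (gf, j) + f y (gf, j)
        rw [map_add]; rfl
      map_smul' := fun a x => by
        funext j
        show f (a • x) (gf, j) = a * f x (gf, j)
        rw [map_smul]; rfl }
  have hLker : LinearMap.ker L ≠ ⊥ := by
    intro h
    have hinj : Function.Injective L := LinearMap.ker_eq_bot.mp h
    have := LinearMap.finrank_le_finrank_of_injective hinj
    rw [Module.finrank_fin_fun] at this
    omega
  obtain ⟨s, hsL, hs0⟩ := Submodule.exists_mem_ne_zero_of_ne_bot hLker
  rw [LinearMap.mem_ker] at hsL
  refine ⟨f s, ?_, μ, ?_, ?_⟩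
  · intro h0
    exact hs0 (finj (by rw [h0, map_zero]))
  · have := LinearMap.congr_fun hTF s
    simpa only [LinearMap.comp_apply, LinearMap.smul_apply] using this
  · ext p
    obtain ⟨p1, p2⟩ := p
    show (if p1 = gf then (1 : ℂ) else 0) * f s (p1, p2) = 0
    by_cases h : p1 = gf
    · have h2 : f s (gf, p2) = 0 := congrFun hsL p2
      rw [h]
      simp [h2]
    · simp [h]
end

section
/- Decoherence-free subspace criterion for Kraus dynamics: let V be a finite-dimensional complex inner product space, let A_1, …, A_m : V → V be linear operators satisfying Σ_i A_i† A_i = 1, and let W be a nonzero subspace of V. Then the following are equivalent: (i) for every unit vector j ∈ W, Σ_i A_i π_j A_i† = π_j, where π_j is the orthogonal projection onto the span of j; (ii) there exist scalars c_1, …, c_m ∈ ℂ with Σ_i |c_i|² = 1 such that A_i j = c_i • j for every j ∈ W and every i. -/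
open scoped InnerProductSpace ComplexConjugate

noncomputable def lineProj {V : Type*} [NormedAddCommGroup V] [InnerProductSpace ℂ V]
    (j : V) : V →ₗ[ℂ] V :=
  LinearMap.smulRight ((innerSL ℂ j).toLinearMap) j

section aux
variable {V : Type*} [NormedAddCommGroup V] [InnerProductSpace ℂ V] [FiniteDimensional ℂ V]

omit [FiniteDimensional ℂ V] in
lemma lineProj_apply (j v : V) : lineProj j v = ⟪j, v⟫_ℂ • j := rfl

lemma kraus_norm_sum {m : ℕ} (A : Fin m → (V →ₗ[ℂ] V))
    (hA : ∑ i, LinearMap.adjoint (A i) * A i = 1) (j : V) (hj : ‖j‖ = 1) :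
    ∑ i, ‖A i j‖ ^ 2 = 1 := by
  have h1 : (∑ i, LinearMap.adjoint (A i) * A i) j = j := by rw [hA]; rfl
  have h2 : ⟪j, (∑ i, LinearMap.adjoint (A i) * A i) j⟫_ℂ = 1 := by
    rw [h1, inner_self_eq_norm_sq_to_K, hj]; norm_num
  rw [LinearMap.sum_apply, inner_sum] at h2
  have h3 : ∑ i, ((‖A i j‖ : ℝ) ^ 2 : ℂ) = 1 := by
    rw [← h2]
    refine Finset.sum_congr rfl fun i _ => ?_
    rw [Module.End.mul_apply, LinearMap.adjoint_inner_right, inner_self_eq_norm_sq_to_K]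
    norm_num
  exact_mod_cast h3

end aux

/-- Decoherence-free subspace criterion for Kraus dynamics: given Kraus operators
`A_i` with `∑ i, A_i† A_i = 1` and a nonzero subspace `W`, the following are
equivalent: (i) for every unit vector `j ∈ W`, `∑ i, A_i π_j A_i† = π_j`;
(ii) there are scalars `c_i` with `∑ i, |c_i|² = 1` such that `A_i j = c_i • j`
for every `j ∈ W` and every `i`. -/
theorem dfs_criterion_kraus
    {V : Type*} [NormedAddCommGroup V] [InnerProductSpace ℂ V] [FiniteDimensional ℂ V]
    {m : ℕ} (A : Fin m → (V →ₗ[ℂ] V))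
    (hA : ∑ i, LinearMap.adjoint (A i) * A i = 1)
    (W : Submodule ℂ V) (hW : W ≠ ⊥) :
    (∀ j : V, j ∈ W → ‖j‖ = 1 →
        ∑ i, A i * lineProj j * LinearMap.adjoint (A i) = lineProj j) ↔
      (∃ c : Fin m → ℂ, ∑ i, ‖c i‖ ^ 2 = 1 ∧ ∀ j ∈ W, ∀ i, A i j = c i • j) := by
  constructor
  · intro h
    -- key: on unit vectors of W, each A i acts as a scalar
    have key : ∀ j : V, j ∈ W → ‖j‖ = 1 → ∀ i, A i j = ⟪j, A i j⟫_ℂ • j := by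
      intro j hjW hj i
      have hs1 : ∑ i, ‖A i j‖ ^ 2 = 1 := kraus_norm_sum A hA j hj
      have hs2 : ∑ i, ‖⟪j, A i j⟫_ℂ‖ ^ 2 = 1 := by
        have h0 := h j hjW hj
        have h1 : ⟪j, (∑ i, A i * lineProj j * LinearMap.adjoint (A i)) j⟫_ℂ
            = ⟪j, lineProj j j⟫_ℂ := by rw [h0]
        have h2 : ⟪j, lineProj j j⟫_ℂ = 1 := by
          rw [lineProj_apply, inner_smul_right, inner_self_eq_norm_sq_to_K, hj]; norm_num
        rw [h2, LinearMap.sum_apply, inner_sum] at h1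
        have h3 : ∑ i, ((‖⟪j, A i j⟫_ℂ‖ : ℝ) ^ 2 : ℂ) = 1 := by
          rw [← h1]
          refine Finset.sum_congr rfl fun i _ => ?_
          rw [Module.End.mul_apply, Module.End.mul_apply, lineProj_apply,
            LinearMap.adjoint_inner_right, map_smul, inner_smul_right,
            ← inner_conj_symm (A i j) j, RCLike.conj_mul]
          norm_num
        exact_mod_cast h3
      have hle : ∀ i, ‖⟪j, A i j⟫_ℂ‖ ^ 2 ≤ ‖A i j‖ ^ 2 := by
        intro i
        have hcs := norm_inner_le_norm (𝕜 := ℂ) j (A i j)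
        rw [hj, one_mul] at hcs
        exact pow_le_pow_left₀ (norm_nonneg _) hcs 2
      have heq : ‖A i j‖ ^ 2 - ‖⟪j, A i j⟫_ℂ‖ ^ 2 = 0 := by
        have hz : ∑ i, (‖A i j‖ ^ 2 - ‖⟪j, A i j⟫_ℂ‖ ^ 2) = 0 := by
          rw [Finset.sum_sub_distrib, hs1, hs2, sub_self]
        exact (Finset.sum_eq_zero_iff_of_nonneg
          (fun i _ => sub_nonneg.2 (hle i))).1 hz i (Finset.mem_univ i)
      rcases eq_or_ne (A i j) 0 with h0 | h0
      · simp [h0]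
      · have hj0 : j ≠ 0 := by intro hh; rw [hh, norm_zero] at hj; norm_num at hj
        have hninner : ‖⟪j, A i j⟫_ℂ‖ = ‖j‖ * ‖A i j‖ := by
          rw [hj, one_mul]
          have h4 : ‖⟪j, A i j⟫_ℂ‖ ^ 2 = ‖A i j‖ ^ 2 := by linarith
          calc ‖⟪j, A i j⟫_ℂ‖ = Real.sqrt (‖⟪j, A i j⟫_ℂ‖ ^ 2) := (Real.sqrt_sq (norm_nonneg _)).symm
            _ = Real.sqrt (‖A i j‖ ^ 2) := by rw [h4]
            _ = ‖A i j‖ := Real.sqrt_sq (norm_nonneg _)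
        obtain ⟨r, -, hr⟩ := (norm_inner_eq_norm_iff hj0 h0).1 hninner
        have hrj : ⟪j, A i j⟫_ℂ = r := by
          rw [hr, inner_smul_right, inner_self_eq_norm_sq_to_K, hj]; norm_num
        rw [hrj]; exact hr
    -- pick a unit vector in W
    obtain ⟨j0, hj0W, hj0⟩ := Submodule.ne_bot_iff W |>.1 hW
    set u0 : V := (‖j0‖⁻¹ : ℂ) • j0 with hu0def
    have hnj0 : ‖j0‖ ≠ 0 := norm_ne_zero_iff.2 hj0
    have hu0n : ‖u0‖ = 1 := by
      rw [hu0def, norm_smul]; simp [abs_of_nonneg (inv_nonneg.2 (norm_nonneg j0)),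
        inv_mul_cancel₀ hnj0]
    have hu0W : u0 ∈ W := W.smul_mem _ hj0W
    have hu00 : u0 ≠ 0 := by intro hh; rw [hh, norm_zero] at hu0n; norm_num at hu0n
    refine ⟨fun i => ⟪u0, A i u0⟫_ℂ, ?_, ?_⟩
    · have := kraus_norm_sum A hA u0 hu0n
      rw [← this]
      refine Finset.sum_congr rfl fun i _ => ?_
      rw [key u0 hu0W hu0n i, norm_smul, hu0n, mul_one]
    · intro j hjW i
      rcases eq_or_ne j 0 with rfl | hjne
      · simp
      · have hnj : ‖j‖ ≠ 0 := norm_ne_zero_iff.2 hjne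
        set u : V := (‖j‖⁻¹ : ℂ) • j with hudef
        have hun : ‖u‖ = 1 := by
          rw [hudef, norm_smul]; simp [abs_of_nonneg (inv_nonneg.2 (norm_nonneg j)),
            inv_mul_cancel₀ hnj]
        have huW : u ∈ W := W.smul_mem _ hjW
        have hu0' : u ≠ 0 := by intro hh; rw [hh, norm_zero] at hun; norm_num at hun
        have hju : j = (‖j‖ : ℂ) • u := by
          rw [hudef, smul_smul, mul_inv_cancel₀ (by exact_mod_cast hnj), one_smul]
        have hd : A i u = ⟪u, A i u⟫_ℂ • u := key u huW hun i
        have hc0 : A i u0 = ⟪u0, A i u0⟫_ℂ • u0 := key u0 hu0W hu0n i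
        set d := ⟪u, A i u⟫_ℂ
        set c := ⟪u0, A i u0⟫_ℂ
        have hdc : d = c := by
          by_cases hdep : ∃ α : ℂ, u = α • u0
          · obtain ⟨α, hα⟩ := hdep
            have hα0 : α ≠ 0 := by
              intro hh; rw [hh, zero_smul] at hα; exact hu0' hα
            have h1 : A i u = c • u := by
              rw [hα, map_smul, hc0, smul_comm]
            have h3 : d • u = c • u := by rw [← hd, h1]
            have h4 : (d - c) • u = 0 := by rw [sub_smul, h3, sub_self]
            exact sub_eq_zero.1 ((smul_eq_zero.1 h4).resolve_right hu0')
          · set w : V := u + u0 with hwdef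
            have hw0 : w ≠ 0 := by
              intro hh
              have hh' : u + u0 = 0 := hh
              exact hdep ⟨-1, by rw [neg_one_smul]; exact eq_neg_of_add_eq_zero_left hh'⟩
            have hnw : ‖w‖ ≠ 0 := norm_ne_zero_iff.2 hw0
            set w' : V := (‖w‖⁻¹ : ℂ) • w with hw'def
            have hw'n : ‖w'‖ = 1 := by
              rw [hw'def, norm_smul]; simp [abs_of_nonneg (inv_nonneg.2 (norm_nonneg w)),
                inv_mul_cancel₀ hnw]
            have hw'W : w' ∈ W := W.smul_mem _ (W.add_mem huW hu0W)
            have hkw : A i w' = ⟪w', A i w'⟫_ℂ • w' := key w' hw'W hw'n i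
            set e := ⟪w', A i w'⟫_ℂ
            have hww' : w = (‖w‖ : ℂ) • w' := by
              rw [hw'def, smul_smul, mul_inv_cancel₀ (by exact_mod_cast hnw), one_smul]
            have hAw : A i w = e • w := by
              rw [hww', map_smul, hkw, smul_comm]
            have hsplit : d • u + c • u0 = e • u + e • u0 := by
              have : A i w = A i u + A i u0 := by rw [hwdef, map_add]
              rw [hAw, hwdef, smul_add] at this
              rw [← hd, ← hc0]; exact this.symm
            have hde : d = e := by
              by_contra hne
              apply hdep
              refine ⟨(d - e)⁻¹ * (e - c), ?_⟩
              have h5 : (d - e) • u = (e - c) • u0 := by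
                linear_combination (norm := module) hsplit
              have h6 : u = ((d - e)⁻¹ * (e - c)) • u0 := by
                rw [mul_smul, ← h5, smul_smul, inv_mul_cancel₀ (sub_ne_zero.2 hne), one_smul]
              exact h6
            have hec : e = c := by
              have h7 : (e - c) • u0 = 0 := by
                have h5 : (d - e) • u = (e - c) • u0 := by
                  linear_combination (norm := module) hsplit
                rw [hde, sub_self, zero_smul] at h5
                exact h5.symm
              exact sub_eq_zero.1 ((smul_eq_zero.1 h7).resolve_right hu00)
            rw [hde, hec]
        rw [hju, map_smul, hd, hdc, smul_comm]
  · rintro ⟨c, hc1, hc2⟩ j hjW hjn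
    have hcsum : ∑ i, (starRingEnd ℂ) (c i) * c i = 1 := by
      have hterm : ∀ i, (starRingEnd ℂ) (c i) * c i = ((‖c i‖ : ℝ) ^ 2 : ℂ) := by
        intro i; rw [RCLike.conj_mul]; norm_num
      rw [Finset.sum_congr rfl fun i _ => hterm i]
      exact_mod_cast congrArg (Complex.ofReal) hc1
    ext v
    rw [LinearMap.sum_apply]
    have hterm : ∀ i, (A i * lineProj j * LinearMap.adjoint (A i)) v
        = ((starRingEnd ℂ) (c i) * c i * ⟪j, v⟫_ℂ) • j := by
      intro i
      rw [Module.End.mul_apply, Module.End.mul_apply, lineProj_apply,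
        LinearMap.adjoint_inner_right, map_smul, hc2 j hjW i, inner_smul_left,
        smul_smul]
      ring_nf
    rw [Finset.sum_congr rfl fun i _ => hterm i, ← Finset.sum_smul, ← Finset.sum_mul,
      hcsum, one_mul, lineProj_apply]
end
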